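/- Let Σ be a signed graph on vertex set {1,…,n} whose quadratic form q_Σ is positive definite (q_Σ(x) > 0 for all nonzero x ∈ ℤ^n). Then every full (chordless) cycle of Σ contains an odd number of dotted edges. -/

import Mathlib

open Finset

def IsSignMatrix {n : ℕ} (a : Fin n → Fin n → ℤ) : Prop :=
  (∀ i j, a j i = a i j) ∧ (∀ i, a i i = 0) ∧
    (∀ i j, a i j = -1 ∨ a i j = 0 ∨ a i j = 1)

def sgnForm {n : ℕ} (a : Fin n → Fin n → ℤ) (x : Fin n → ℤ) : ℤ :=
  (∑ i, x i ^ 2) + ∑ i, ∑ j, if i < j then a i j * (x i * x j) else 0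

def IsFullCycle {n m : ℕ} (a : Fin n → Fin n → ℤ) (c : Fin (m + 3) → Fin n) : Prop :=
  Function.Injective c ∧
    (∀ k, a (c k) (c (k + 1)) ≠ 0) ∧
    (∀ k l : Fin (m + 3), a (c k) (c l) ≠ 0 → l = k + 1 ∨ k = l + 1)

def dottedCount {n m : ℕ} (a : Fin n → Fin n → ℤ) (c : Fin (m + 3) → Fin n) : ℕ :=
  (Finset.univ.filter fun k : Fin (m + 3) => a (c k) (c (k + 1)) = 1).card

section Aux

open Fin.NatCast

variable {n m : ℕ} (a : Fin n → Fin n → ℤ) (c : Fin (m + 3) → Fin n)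

private def cyc (k : Fin (m + 3)) : ℤ := a (c k) (c (k + 1))

private def eps (j : ℕ) : ℤ := ∏ i ∈ Finset.range j, -(cyc a c (i : Fin (m + 3)))

private def xv : Fin n → ℤ := fun i => ∑ k, if c k = i then eps a c k.val else 0

private lemma eps_mul_self (hg : ∀ k : Fin (m + 3), cyc a c k = 1 ∨ cyc a c k = -1)
    (j : ℕ) : eps a c j * eps a c j = 1 := by
  unfold eps
  rw [← Finset.prod_mul_distrib]
  apply Finset.prod_eq_one
  intro i _
  rcases hg (i : Fin (m + 3)) with h | h <;> rw [h] <;> ring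

private lemma tot (hg : ∀ k : Fin (m + 3), cyc a c k = 1 ∨ cyc a c k = -1)
    (hd : Even (dottedCount a c)) : eps a c (m + 3) = 1 := by
  unfold eps
  rw [← Fin.prod_univ_eq_prod_range (fun i => -(cyc a c (i : Fin (m + 3)))) (m + 3)]
  have h1 : ∀ k : Fin (m + 3), -(cyc a c ((k.val : ℕ) : Fin (m + 3)))
      = if cyc a c k = 1 then (-1 : ℤ) else 1 := by
    intro k
    rw [Fin.cast_val_eq_self]
    rcases hg k with h | h <;> simp [h]
  rw [Finset.prod_congr rfl (fun k _ => h1 k), Finset.prod_ite, Finset.prod_const,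
    Finset.prod_const, one_pow, mul_one]
  have h2 : (Finset.univ.filter fun k : Fin (m + 3) => cyc a c k = 1).card
      = dottedCount a c := rfl
  rw [h2]
  exact Even.neg_one_pow hd

private lemma key (hg : ∀ k : Fin (m + 3), cyc a c k = 1 ∨ cyc a c k = -1)
    (htot : eps a c (m + 3) = 1) (k : Fin (m + 3)) :
    cyc a c k * (eps a c k.val * eps a c (k + 1).val) = -1 := by
  have hsq := eps_mul_self a c hg k.val
  rcases Nat.lt_or_ge k.val (m + 2) with hk | hk
  · have hlt : k < Fin.last (m + 2) := by
      rw [Fin.lt_def]; simpa using hk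
    rw [Fin.val_add_one_of_lt hlt]
    have h2 : eps a c (k.val + 1) = eps a c k.val * -(cyc a c k) := by
      unfold eps
      rw [Finset.prod_range_succ, Fin.cast_val_eq_self]
    rw [h2]
    have hc2 : cyc a c k * cyc a c k = 1 := by rcases hg k with h | h <;> rw [h] <;> ring
    linear_combination (-(eps a c k.val * eps a c k.val)) * hc2 - hsq
  · have hk' : k.val = m + 2 := by have := k.isLt; omega
    have hk1 : k + 1 = 0 := by
      have hlast : k = Fin.last (m + 2) := Fin.ext hk'
      rw [hlast, Fin.last_add_one]
    rw [hk1]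
    have h0 : eps a c (0 : Fin (m + 3)).val = 1 := by simp [eps]
    rw [h0]
    have h2 : eps a c (m + 2 + 1) = eps a c (m + 2) * -(cyc a c ((m + 2 : ℕ) : Fin (m + 3))) :=
      Finset.prod_range_succ _ _
    have h3 : ((m + 2 : ℕ) : Fin (m + 3)) = k := by
      apply Fin.ext
      rw [Fin.val_natCast, Nat.mod_eq_of_lt (by omega), hk']
    rw [h3] at h2
    rw [show m + 2 + 1 = m + 3 from rfl, htot] at h2
    rw [hk']
    linear_combination h2

private lemma sumB (B : Fin n → ℤ) :
    ∑ i, B i * xv a c i = ∑ k, B (c k) * eps a c k.val := by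
  unfold xv
  simp only [Finset.mul_sum, mul_ite, mul_zero]
  rw [Finset.sum_comm]
  simp [Finset.sum_ite_eq]

private lemma xv_c (hinj : Function.Injective c) (k : Fin (m + 3)) :
    xv a c (c k) = eps a c k.val := by
  unfold xv
  simp [hinj.eq_iff, Finset.sum_ite_eq']

end Aux

/-- if the quadratic form of a signed graph is positive definite, then every
full (chordless) cycle contains an odd number of dotted edges. -/
theorem odd_dotted_of_posDef {n m : ℕ} (a : Fin n → Fin n → ℤ)
    (ha : IsSignMatrix a)
    (hpd : ∀ x : Fin n → ℤ, x ≠ 0 → 0 < sgnForm a x)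
    (c : Fin (m + 3) → Fin n) (hc : IsFullCycle a c) :
    Odd (dottedCount a c) := by
  by_contra hodd
  have hd : Even (dottedCount a c) := Nat.not_odd_iff_even.mp hodd
  obtain ⟨hinj, hne0, hfull⟩ := hc
  have hg : ∀ k : Fin (m + 3), cyc a c k = 1 ∨ cyc a c k = -1 := by
    intro k
    rcases ha.2.2 (c k) (c (k + 1)) with h | h | h
    · right; exact h
    · exact absurd h (hne0 k)
    · left; exact h
  have htot := tot a c hg hd
  have hkey := key a c hg htot
  -- the vector is nonzero
  have hx0 : xv a c ≠ 0 := by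
    intro h
    have h1 : xv a c (c 0) = 1 := by
      rw [xv_c a c hinj 0]; simp [eps]
    rw [h] at h1
    simp at h1
  have hpos := hpd (xv a c) hx0
  -- Q = m + 3
  have hQ : (∑ i, xv a c i ^ 2) = ((m : ℤ) + 3) := by
    calc (∑ i, xv a c i ^ 2) = ∑ i, xv a c i * xv a c i := by
          apply Finset.sum_congr rfl; intro i _; ring
      _ = ∑ k, xv a c (c k) * eps a c k.val := sumB a c _
      _ = ∑ _k : Fin (m + 3), (1 : ℤ) := by
          apply Finset.sum_congr rfl; intro k _
          rw [xv_c a c hinj k]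
          exact eps_mul_self a c hg k.val
      _ = ((m : ℤ) + 3) := by
          rw [Finset.sum_const, Finset.card_univ, Fintype.card_fin]
          ring
  -- T = -2 (m+3)
  have hT : (∑ i, ∑ j, a i j * (xv a c i * xv a c j)) = -2 * ((m : ℤ) + 3) := by
    calc (∑ i, ∑ j, a i j * (xv a c i * xv a c j))
        = ∑ i, (∑ j, a i j * xv a c j) * xv a c i := by
          apply Finset.sum_congr rfl; intro i _
          rw [Finset.sum_mul]
          apply Finset.sum_congr rfl; intro j _; ring
      _ = ∑ k, (∑ j, a (c k) j * xv a c j) * eps a c k.val :=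
          sumB a c (fun i => ∑ j, a i j * xv a c j)
      _ = ∑ k, (∑ l, a (c k) (c l) * eps a c l.val) * eps a c k.val := by
          apply Finset.sum_congr rfl; intro k _
          rw [sumB a c (fun j => a (c k) j)]
      _ = ∑ _k : Fin (m + 3), (-2 : ℤ) := by
          apply Finset.sum_congr rfl; intro k _
          have hne12 : (k + 1 : Fin (m + 3)) ≠ k - 1 := by
            intro h
            have h1 : k + 1 + 1 = k + 0 := by rw [h, sub_add_cancel, add_zero]
            rw [add_assoc] at h1
            have h2 := add_left_cancel h1
            have h3 := congrArg Fin.val h2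
            rw [Fin.add_def, Fin.val_one] at h3
            have h4 : (1 + 1) % (m + 3) = 0 := h3
            rw [Nat.mod_eq_of_lt (by omega)] at h4
            omega
          have hinner : (∑ l, a (c k) (c l) * eps a c l.val)
              = a (c k) (c (k + 1)) * eps a c (k + 1).val
                + a (c k) (c (k - 1)) * eps a c (k - 1).val := by
            rw [← Finset.sum_subset (Finset.subset_univ ({k + 1, k - 1} : Finset (Fin (m + 3))))]
            · rw [Finset.sum_pair hne12]
            · intro l _ hl
              have hz : a (c k) (c l) = 0 := by
                by_contra hnz
                rcases hfull k l hnz with h | h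
                · exact hl (by simp [h])
                · apply hl
                  simp only [Finset.mem_insert, Finset.mem_singleton]
                  right
                  rw [eq_sub_iff_add_eq, ← h]
              rw [hz, zero_mul]
          rw [hinner]
          have e1 := hkey k
          have e2 := hkey (k - 1)
          unfold cyc at e1 e2
          rw [sub_add_cancel] at e2
          have hsym : a (c k) (c (k - 1)) = a (c (k - 1)) (c k) := ha.1 (c (k - 1)) (c k)
          rw [hsym]
          linear_combination e1 + e2
      _ = -2 * ((m : ℤ) + 3) := by
          rw [Finset.sum_const, Finset.card_univ, Fintype.card_fin]
          ring
  -- 2S = T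
  have flip : (∑ i, ∑ j, if j < i then a i j * (xv a c i * xv a c j) else 0)
      = ∑ i, ∑ j, if i < j then a i j * (xv a c i * xv a c j) else 0 := by
    rw [Finset.sum_comm]
    apply Finset.sum_congr rfl; intro i _
    apply Finset.sum_congr rfl; intro j _
    by_cases h : i < j
    · rw [if_pos h, if_pos h, ha.1]; ring
    · rw [if_neg h, if_neg h]
  have hsplit : ∀ i j : Fin n, a i j * (xv a c i * xv a c j)
      = (if i < j then a i j * (xv a c i * xv a c j) else 0)
        + (if j < i then a i j * (xv a c i * xv a c j) else 0) := by
    intro i j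
    rcases lt_trichotomy i j with h | h | h
    · rw [if_pos h, if_neg (asymm h), add_zero]
    · subst h
      rw [ha.2.1, if_neg (lt_irrefl i), zero_mul, add_zero]
    · rw [if_neg (asymm h), if_pos h, zero_add]
  have hS2 : (∑ i, ∑ j, if i < j then a i j * (xv a c i * xv a c j) else 0) * 2
      = ∑ i, ∑ j, a i j * (xv a c i * xv a c j) := by
    calc (∑ i, ∑ j, if i < j then a i j * (xv a c i * xv a c j) else 0) * 2
        = (∑ i, ∑ j, if i < j then a i j * (xv a c i * xv a c j) else 0)
          + (∑ i, ∑ j, if j < i then a i j * (xv a c i * xv a c j) else 0) := by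
          rw [flip]; ring
      _ = ∑ i, ∑ j, ((if i < j then a i j * (xv a c i * xv a c j) else 0)
            + (if j < i then a i j * (xv a c i * xv a c j) else 0)) := by
          rw [← Finset.sum_add_distrib]
          apply Finset.sum_congr rfl; intro i _
          rw [← Finset.sum_add_distrib]
      _ = ∑ i, ∑ j, a i j * (xv a c i * xv a c j) := by
          apply Finset.sum_congr rfl; intro i _
          apply Finset.sum_congr rfl; intro j _
          exact (hsplit i j).symm
  have hzero : sgnForm a (xv a c) * 2 = 0 := by
    unfold sgnForm
    rw [add_mul, hS2, hQ, hT]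
    ring
  have : sgnForm a (xv a c) = 0 := by omega
  omega
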